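/- To any linear lambda term with k free variables, p applications and q abstractions there is naturally associated a rooted trivalent map with boundary of degree k and p + q trivalent vertices: turning each application node and each abstraction node of its string diagram into a trivalent vertex, attaching a univalent vertex at the end of the outgoing root wire, and taking the k dangling input wires in the order of the context as the boundary, yields a transitive Γ₃-set in which v has exactly one fixed point (the root) and e has exactly k fixed points (the boundary). -/

import Mathlib

/-! ## Lambda terms and linearity -/

inductive Term : Type
  | var : ℕ → Term
  | app : Term → Term → Term
  | lam : ℕ → Term → Term
deriving DecidableEq

namespace Term

/-- total number of applications and abstractions -/
def size : Term → ℕ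
  | var _ => 0
  | app t u => size t + size u + 1
  | lam _ t => size t + 1

def apps : Term → ℕ
  | var _ => 0
  | app t u => apps t + apps u + 1
  | lam _ t => apps t

def lams : Term → ℕ
  | var _ => 0
  | app t u => lams t + lams u
  | lam _ t => lams t + 1

/-- all variable names occurring in a term (free, bound or binding) -/
def varsList : Term → List ℕ
  | var z => [z]
  | app t u => varsList t ++ varsList u
  | lam z t => z :: varsList t

/-- the list of free variables -/
def freeList : Term → List ℕ
  | var z => [z]
  | app t u => freeList t ++ freeList u
  | lam z t => (freeList t).filter (fun y => y ≠ z)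

/-- the list of bound (binder) variables -/
def boundVars : Term → List ℕ
  | var _ => []
  | app t u => boundVars t ++ boundVars u
  | lam z t => z :: boundVars t

/-- rename the free occurrences of `x` to `y` -/
def rename (x y : ℕ) : Term → Term
  | var z => if z = x then var y else var z
  | app t u => app (rename x y t) (rename x y u)
  | lam z t => if z = x then lam z t else lam z (rename x y t)

/-- substitution of `u` for the free occurrences of `x` -/
def subst (u : Term) (x : ℕ) : Term → Term
  | var z => if z = x then u else var z
  | app t₁ t₂ => app (subst u x t₁) (subst u x t₂)
  | lam z t => if z = x then lam z t else lam z (subst u x t)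

end Term

/-- the linearity relation `Γ ⊢ t` between contexts and lambda terms -/
inductive Linear : List ℕ → Term → Prop
  | var (x : ℕ) : Linear [x] (.var x)
  | app {Γ Δ : List ℕ} {t u : Term} : Linear Γ t → Linear Δ u →
      (Γ ++ Δ).Nodup → Linear (Γ ++ Δ) (.app t u)
  | lam {Γ : List ℕ} {x : ℕ} {t : Term} : Linear (Γ ++ [x]) t → Linear Γ (.lam x t)
  | exch {Γ Δ : List ℕ} {x y : ℕ} {t : Term} :
      Linear (Γ ++ y :: x :: Δ) t → Linear (Γ ++ x :: y :: Δ) t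

/-! ## Combinatorial maps -/

/-- the data of a candidate rooted trivalent map with boundary:
a set of darts with functions `v`, `e`, a root dart and a boundary list -/
structure PreMap : Type 1 where
  carrier : Type
  v : carrier → carrier
  e : carrier → carrier
  root : carrier
  boundary : List carrier

/-- `M` is a rooted trivalent map with boundary: `v` and `e` generate a
transitive action of `Γ₃ = ⟨v, e ∣ v³ = e² = 1⟩`, the fixed points of `v` are
exactly the root and the fixed points of `e` are exactly the boundary. -/
structure IsRTMapB (M : PreMap) : Prop where
  v_cube : ∀ x, M.v (M.v (M.v x)) = x
  e_sq : ∀ x, M.e (M.e x) = x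
  trans : ∀ x y, Relation.EqvGen (fun a b => M.v a = b ∨ M.e a = b) x y
  v_fix : ∀ x, M.v x = x ↔ x = M.root
  e_fix : ∀ x, M.e x = x ↔ x ∈ M.boundary
  nodup : M.boundary.Nodup

/-- isomorphism of rooted maps with boundary -/
def MapIso (M M' : PreMap) : Prop :=
  ∃ h : M.carrier ≃ M'.carrier,
    (∀ x, h (M.v x) = M'.v (h x)) ∧ (∀ x, h (M.e x) = M'.e (h x)) ∧
    h M.root = M'.root ∧ M.boundary.map h = M'.boundary

/-! ## The underlying rooted trivalent map of a linear lambda term -/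

namespace Term

/-- the subterm at a given position (`false` = function/body child, `true` = argument) -/
def sub? : Term → List Bool → Option Term
  | t, [] => some t
  | .app t _, false :: p => sub? t p
  | .app _ u, true :: p => sub? u p
  | .lam _ t, false :: p => sub? t p
  | _, _ => none

/-- positions of the application and abstraction nodes of a term -/
def nodes : Term → List (List Bool)
  | .var _ => []
  | .app t u => [] :: ((nodes t).map (false :: ·) ++ (nodes u).map (true :: ·))
  | .lam _ t => [] :: (nodes t).map (false :: ·)

/-- all positions of subterm occurrences -/
def allPos : Term → List (List Bool)
  | .var _ => [[]]
  | .app t u => [] :: ((allPos t).map (false :: ·) ++ (allPos u).map (true :: ·))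
  | .lam _ t => [] :: (allPos t).map (false :: ·)

def isLamOf (t : Term) (x : ℕ) (p : List Bool) : Bool :=
  match sub? t p with
  | some (.lam y _) => y == x
  | _ => false

/-- the position of the binder of the variable occurrence at position `q`
(`none` if that occurrence is free, or if there is no variable there) -/
def binderPos (t : Term) (q : List Bool) : Option (List Bool) :=
  match sub? t q with
  | some (.var x) =>
      (((List.range q.length).map (fun i => q.take i)).reverse).find? (isLamOf t x)
  | _ => none

/-! Dart indices: `0` is the dart of the root vertex, and `1 + 3*j + i` is
port `i` of the `j`-th node (around an application node, ports `0,1,2` are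
function, argument, continuation; around an abstraction node they are
body, parameter, root). -/

/-- the dart at the lower end of the wire of the subterm occurrence at `p` -/
def dnIdx (t : Term) (p : List Bool) : ℕ :=
  match p.getLast? with
  | none => 0
  | some d =>
    let q := p.dropLast
    let port : ℕ :=
      match sub? t q with
      | some (.app _ _) => if d then 1 else 0
      | _ => 0
    1 + 3 * ((nodes t).idxOf q) + port

/-- the dart at the upper end of the wire of the subterm occurrence at `p` -/
def topIdx (t : Term) (p : List Bool) : ℕ :=
  match sub? t p with
  | some (.var _) =>
      match binderPos t p with
      | some q => 1 + 3 * ((nodes t).idxOf q) + 1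
      | none => dnIdx t p
  | some _ => 1 + 3 * ((nodes t).idxOf p) + 2
  | none => 0

/-- the position of the occurrence of the variable `x` bound by the abstraction at `p` -/
def occOf (t : Term) (p : List Bool) (x : ℕ) : Option (List Bool) :=
  (allPos t).find? (fun q => decide (sub? t q = some (.var x) ∧ binderPos t q = some p))

/-- the position of the free occurrence of the variable `x` -/
def freeOcc (t : Term) (x : ℕ) : Option (List Bool) :=
  (allPos t).find? (fun q => decide (sub? t q = some (.var x) ∧ binderPos t q = none))

/-- the edge involution on dart indices -/
def eIdx (t : Term) (d : ℕ) : ℕ :=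
  if d = 0 then topIdx t []
  else
    let j := (d - 1) / 3
    let i := (d - 1) % 3
    match (nodes t)[j]? with
    | none => d
    | some p =>
      match sub? t p with
      | some (.app _ _) =>
          if i = 0 then topIdx t (p ++ [false])
          else if i = 1 then topIdx t (p ++ [true])
          else dnIdx t p
      | some (.lam x _) =>
          if i = 0 then topIdx t (p ++ [false])
          else if i = 1 then
            match occOf t p x with
            | some q => dnIdx t q
            | none => d
          else dnIdx t p
      | _ => d

end Term

/-- the underlying rooted trivalent map (with boundary) of a linear lambda
term `(Γ, t)`: application and abstraction nodes become trivalent vertices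
(with the counterclockwise ordering of ports fixed by the convention above),
a univalent vertex (dart `0`) is attached at the end of the outgoing root
wire, and the darts of the dangling input wires, in the order of the context
`Γ`, form the boundary. -/
def underlying (Γ : List ℕ) (t : Term) : PreMap where
  carrier := Fin (3 * (Term.nodes t).length + 1)
  v := fun d =>
    if d.val = 0 then d
    else ⟨(1 + 3 * ((d.val - 1) / 3) + ((d.val - 1) % 3 + 2) % 3) %
            (3 * (Term.nodes t).length + 1), Nat.mod_lt _ (by omega)⟩
  e := fun d => ⟨Term.eIdx t d.val % (3 * (Term.nodes t).length + 1),
                 Nat.mod_lt _ (by omega)⟩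
  root := ⟨0, by omega⟩
  boundary := Γ.map (fun x =>
    ⟨(match Term.freeOcc t x with
      | some q => Term.dnIdx t q
      | none => 0) % (3 * (Term.nodes t).length + 1), Nat.mod_lt _ (by omega)⟩)

namespace LamMap
open Term

theorem sub?_append (p q : List Bool) (t : Term) :
    sub? t (p ++ q) = (sub? t p).bind (fun s => sub? s q) := by
  induction p generalizing t with
  | nil => simp [sub?]
  | cons b p ih =>
    cases t with
    | var x => cases b <;> simp [sub?]
    | app a c => cases b <;> simp [sub?, ih]
    | lam x a => cases b <;> simp [sub?, ih]

theorem mem_allPos {t : Term} {p : List Bool} :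
    p ∈ allPos t ↔ (sub? t p).isSome := by
  induction t generalizing p with
  | var x => cases p with
    | nil => simp [allPos, sub?]
    | cons b q => cases b <;> simp [allPos, sub?]
  | app a c iha ihc =>
    cases p with
    | nil => simp [allPos, sub?]
    | cons b q => cases b <;> simp [allPos, sub?, iha, ihc]
  | lam x a ih =>
    cases p with
    | nil => simp [allPos, sub?]
    | cons b q => cases b <;> simp [allPos, sub?, ih]

theorem mem_nodes {t : Term} {p : List Bool} :
    p ∈ nodes t ↔ ∃ s, sub? t p = some s ∧ ∀ x, s ≠ .var x := by
  induction t generalizing p with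
  | var x => cases p with
    | nil => simp [nodes, sub?]
    | cons b q => cases b <;> simp [nodes, sub?]
  | app a c iha ihc =>
    cases p with
    | nil => simp [nodes, sub?]
    | cons b q => cases b <;> simp [nodes, sub?, iha, ihc]
  | lam x a ih =>
    cases p with
    | nil => simp [nodes, sub?]
    | cons b q => cases b <;> simp [nodes, sub?, ih]

theorem nodes_subset_allPos {t : Term} {p : List Bool} (h : p ∈ nodes t) :
    p ∈ allPos t := by
  rw [mem_nodes] at h
  rcases h with ⟨s, hs, -⟩
  rw [mem_allPos, hs]; rfl

theorem allPos_nodup (t : Term) : (allPos t).Nodup := by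
  induction t with
  | var x => simp [allPos]
  | app a c iha ihc =>
    simp only [allPos, List.nodup_cons, List.nodup_append, List.mem_append]
    refine ⟨by simp, iha.map (by intro x y h; simpa using h),
      ihc.map (by intro x y h; simpa using h), ?_⟩
    intro q hq q' hq' h
    simp only [List.mem_map] at hq hq'
    rcases hq with ⟨r, -, rfl⟩
    rcases hq' with ⟨r', -, rfl⟩
    simp at h
  | lam x a ih =>
    simp only [allPos, List.nodup_cons]
    exact ⟨by simp, ih.map (by intro x y h; simpa using h)⟩

theorem nodes_nodup (t : Term) : (nodes t).Nodup := by
  induction t with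
  | var x => simp [nodes]
  | app a c iha ihc =>
    simp only [nodes, List.nodup_cons, List.nodup_append, List.mem_append]
    refine ⟨by simp, iha.map (by intro x y h; simpa using h),
      ihc.map (by intro x y h; simpa using h), ?_⟩
    intro q hq q' hq' h
    simp only [List.mem_map] at hq hq'
    rcases hq with ⟨r, -, rfl⟩
    rcases hq' with ⟨r', -, rfl⟩
    simp at h
  | lam x a ih =>
    simp only [nodes, List.nodup_cons]
    exact ⟨by simp, ih.map (by intro x y h; simpa using h)⟩

/-- the parent of a position in `allPos` is a node -/
theorem parent_mem_nodes {t : Term} {p : List Bool} {d : Bool}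
    (h : p ++ [d] ∈ allPos t) : p ∈ nodes t := by
  rw [mem_allPos, sub?_append] at h
  rw [mem_nodes]
  cases hs : sub? t p with
  | none => rw [hs] at h; simp at h
  | some s =>
    refine ⟨s, rfl, ?_⟩
    rintro x rfl
    rw [hs] at h
    cases d <;> simp [sub?] at h

theorem lam_child_false {t : Term} {p : List Bool} {d : Bool} {x : ℕ} {b : Term}
    (h : p ++ [d] ∈ allPos t) (hs : sub? t p = some (.lam x b)) : d = false := by
  rw [mem_allPos, sub?_append, hs] at h
  cases d
  · rfl
  · simp [sub?] at h

theorem prefix_mem_allPos {t : Term} {p q : List Bool}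
    (h : p ++ q ∈ allPos t) : p ∈ allPos t := by
  rw [mem_allPos, sub?_append] at h
  rw [mem_allPos]
  cases hs : sub? t p with
  | none => rw [hs] at h; simp at h
  | some s => rfl

end LamMap
namespace LamMap
theorem sub?_nil (t : Term) : Term.sub? t [] = some t := by cases t <;> rfl
end LamMap
namespace LamMap
open Term

/-- list of proper prefixes, longest first -/
def pl (q : List Bool) : List (List Bool) :=
  ((List.range q.length).map (fun i => q.take i)).reverse

theorem pl_cons (b : Bool) (q : List Bool) :
    pl (b::q) = (pl q).map (b :: ·) ++ [[]] := by
  unfold pl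
  rw [List.length_cons, List.range_succ_eq_map]
  simp [List.map_map, Function.comp_def]

theorem find?_pl_cons (P : List Bool → Bool) (b : Bool) (q : List Bool) :
    (pl (b::q)).find? P =
      (((pl q).find? (fun r => P (b::r))).map (b :: ·)).or
        (if P [] then some [] else none) := by
  rw [pl_cons, List.find?_append, List.find?_map]
  congr 1
  cases hP : P [] <;> simp [List.find?, hP]


theorem sub?_app_false (t u : Term) (q : List Bool) :
    sub? (.app t u) (false::q) = sub? t q := rfl
theorem sub?_app_true (t u : Term) (q : List Bool) :
    sub? (.app t u) (true::q) = sub? u q := rfl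
theorem sub?_lam_false (y : ℕ) (t : Term) (q : List Bool) :
    sub? (.lam y t) (false::q) = sub? t q := rfl
theorem sub?_lam_true (y : ℕ) (t : Term) (q : List Bool) :
    sub? (.lam y t) (true::q) = none := rfl

theorem binderPos_eq_find {t : Term} {q : List Bool} {x : ℕ}
    (h : sub? t q = some (.var x)) :
    binderPos t q = (pl q).find? (isLamOf t x) := by
  unfold binderPos
  rw [h]
  rfl

theorem binderPos_none_of_not_var {t : Term} {q : List Bool}
    (h : ∀ x, sub? t q ≠ some (.var x)) : binderPos t q = none := by
  unfold binderPos
  cases hs : sub? t q with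
  | none => rfl
  | some s => cases s with
    | var y => exact absurd hs (h y)
    | app a b => rfl
    | lam y b => rfl

theorem binderPos_nil (t : Term) : binderPos t [] = none := by
  unfold binderPos
  cases hs : sub? t [] with
  | none => rfl
  | some s => cases s with
    | var y => simp [pl]
    | app a b => rfl
    | lam y b => rfl

theorem isLamOf_app_false (t u : Term) (x : ℕ) (r : List Bool) :
    isLamOf (.app t u) x (false :: r) = isLamOf t x r := rfl

theorem isLamOf_app_true (t u : Term) (x : ℕ) (r : List Bool) :
    isLamOf (.app t u) x (true :: r) = isLamOf u x r := rfl

theorem isLamOf_lam_false (y : ℕ) (t : Term) (x : ℕ) (r : List Bool) :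
    isLamOf (.lam y t) x (false :: r) = isLamOf t x r := rfl

theorem binderPos_app_false (t u : Term) (q : List Bool) :
    binderPos (.app t u) (false::q) = (binderPos t q).map (false :: ·) := by
  cases hs : sub? t q with
  | none =>
    rw [binderPos_none_of_not_var (by simp [sub?_app_false, hs]),
      binderPos_none_of_not_var (by simp [hs])] <;> rfl
  | some s =>
    cases s with
    | var x =>
      rw [binderPos_eq_find hs,
        binderPos_eq_find (show sub? (.app t u) (false::q) = some (.var x) from hs),
        find?_pl_cons]
      have h1 : (fun r => isLamOf (.app t u) x (false :: r)) = isLamOf t x := rfl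
      have h2 : isLamOf (.app t u) x [] = false := rfl
      rw [h1, h2]
      simp
    | app a b =>
      rw [binderPos_none_of_not_var (by simp [sub?_app_false, hs]),
        binderPos_none_of_not_var (by simp [hs])] <;> rfl
    | lam y b =>
      rw [binderPos_none_of_not_var (by simp [sub?_app_false, hs]),
        binderPos_none_of_not_var (by simp [hs])] <;> rfl

theorem binderPos_app_true (t u : Term) (q : List Bool) :
    binderPos (.app t u) (true::q) = (binderPos u q).map (true :: ·) := by
  cases hs : sub? u q with
  | none =>
    rw [binderPos_none_of_not_var (by simp [sub?_app_true, hs]),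
      binderPos_none_of_not_var (by simp [hs])] <;> rfl
  | some s =>
    cases s with
    | var x =>
      rw [binderPos_eq_find hs,
        binderPos_eq_find (show sub? (.app t u) (true::q) = some (.var x) from hs),
        find?_pl_cons]
      have h1 : (fun r => isLamOf (.app t u) x (true :: r)) = isLamOf u x := rfl
      have h2 : isLamOf (.app t u) x [] = false := rfl
      rw [h1, h2]
      simp
    | app a b =>
      rw [binderPos_none_of_not_var (by simp [sub?_app_true, hs]),
        binderPos_none_of_not_var (by simp [hs])] <;> rfl
    | lam y b =>
      rw [binderPos_none_of_not_var (by simp [sub?_app_true, hs]),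
        binderPos_none_of_not_var (by simp [hs])] <;> rfl

theorem binderPos_lam {y : ℕ} {b : Term} {q : List Bool} {x : ℕ}
    (hs : sub? b q = some (.var x)) :
    binderPos (.lam y b) (false::q) =
      ((binderPos b q).map (false :: ·)).or (if y = x then some [] else none) := by
  rw [binderPos_eq_find hs,
    binderPos_eq_find (show sub? (.lam y b) (false::q) = some (.var x) from hs),
    find?_pl_cons]
  have h1 : (fun r => isLamOf (.lam y b) x (false :: r)) = isLamOf b x := rfl
  have h2 : isLamOf (.lam y b) x [] = (y == x) := rfl
  rw [h1, h2]
  by_cases h : y = x <;> simp [h]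

theorem binderPos_lam_none {y : ℕ} {b : Term} {q : List Bool}
    (hs : ∀ x, sub? b q ≠ some (.var x)) :
    binderPos (.lam y b) (false::q) = none :=
  binderPos_none_of_not_var (by intro x h; exact hs x h)

/-- what `binderPos` returns is an enclosing abstraction with the right name -/
theorem binderPos_spec {t : Term} {q r : List Bool} (h : binderPos t q = some r) :
    ∃ x bo, sub? t q = some (.var x) ∧ sub? t r = some (.lam x bo) ∧
      ∃ q', q' ≠ [] ∧ q = r ++ q' := by
  have hvar : ∃ x, sub? t q = some (.var x) := by
    by_contra hc
    push_neg at hc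
    rw [binderPos_none_of_not_var hc] at h
    cases h
  rcases hvar with ⟨x, hx⟩
  rw [binderPos_eq_find hx] at h
  have hmem := List.mem_of_find?_eq_some h
  have hP := List.find?_some h
  refine ⟨x, ?_⟩
  have hlam : ∃ bo, sub? t r = some (.lam x bo) := by
    unfold isLamOf at hP
    cases hsr : sub? t r with
    | none => rw [hsr] at hP; exact absurd hP (by simp)
    | some s => cases s with
      | var z => rw [hsr] at hP; exact absurd hP (by simp)
      | app a c => rw [hsr] at hP; exact absurd hP (by simp)
      | lam z c =>
        rw [hsr] at hP
        simp only [beq_iff_eq] at hP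
        subst hP
        exact ⟨c, rfl⟩
  rcases hlam with ⟨bo, hbo⟩
  refine ⟨bo, hx, hbo, ?_⟩
  unfold pl at hmem
  rw [List.mem_reverse, List.mem_map] at hmem
  rcases hmem with ⟨i, hi, rfl⟩
  rw [List.mem_range] at hi
  exact ⟨q.drop i, by
    intro hd
    have := congrArg List.length hd
    simp at this
    omega, (q.take_append_drop i).symm⟩

end LamMap
namespace LamMap
open Term

/-- structural linearity -/
inductive Lin : Term → Prop
  | var (x : ℕ) : Lin (.var x)
  | app {t u : Term} : Lin t → Lin u → (freeList t ++ freeList u).Nodup →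
      Lin (.app t u)
  | lam {x : ℕ} {t : Term} : Lin t → x ∈ freeList t → (freeList t).Nodup →
      Lin (.lam x t)

theorem linear_nodup {Γ : List ℕ} {t : Term} (h : Linear Γ t) : Γ.Nodup := by
  induction h with
  | var x => simp
  | app h1 h2 hn ih1 ih2 => exact hn
  | lam h ih => exact (List.nodup_append.mp ih).1
  | @exch Γ Δ x y t h ih =>
    exact ((List.Perm.swap x y Δ).append_left Γ).nodup ih

theorem linear_lin {Γ : List ℕ} {t : Term} (h : Linear Γ t) :
    Lin t ∧ Γ.Perm (freeList t) := by
  induction h with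
  | var x => exact ⟨Lin.var x, by simp [freeList]⟩
  | @app Γ Δ t u h1 h2 hn ih1 ih2 =>
    have hperm := ih1.2.append ih2.2
    exact ⟨Lin.app ih1.1 ih2.1 (hperm.nodup hn), by simpa [freeList] using hperm⟩
  | @lam Γ x t h ih =>
    have hΓx : (Γ ++ [x]).Nodup := linear_nodup h
    have hft : (freeList t).Nodup := ih.2.nodup hΓx
    have hx : x ∈ freeList t := ih.2.mem_iff.mp (by simp)
    have hxΓ : x ∉ Γ := by
      rw [List.nodup_append] at hΓx
      intro hc
      exact hΓx.2.2 x hc x (by simp) rfl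
    refine ⟨Lin.lam ih.1 hx hft, ?_⟩
    show Γ.Perm ((freeList t).filter _)
    have := ih.2.filter (fun y => decide (y ≠ x))
    rw [List.filter_append] at this
    have h1 : Γ.filter (fun y => decide (y ≠ x)) = Γ :=
      List.filter_eq_self.mpr (fun a ha => by
        simp only [decide_eq_true_eq]; rintro rfl; exact hxΓ ha)
    have h2 : [x].filter (fun y => decide (y ≠ x)) = [] := by simp
    rw [h1, h2, List.append_nil] at this
    exact this
  | @exch Γ Δ x y t h ih =>
    exact ⟨ih.1, (((List.Perm.swap x y Δ).append_left Γ).symm).trans ih.2⟩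

theorem Lin.nodupFree {t : Term} (h : Lin t) : (freeList t).Nodup := by
  cases h with
  | var x => simp [freeList]
  | app h1 h2 hn => exact hn
  | lam h1 hx hn => exact hn.filter _

theorem Lin.sub {t : Term} (ht : Lin t) {p : List Bool} {s : Term}
    (hs : sub? t p = some s) : Lin s := by
  induction p generalizing t with
  | nil =>
    rw [show sub? t [] = some t by cases t <;> rfl] at hs
    cases hs
    exact ht
  | cons b q ih =>
    cases ht with
    | var x => cases b <;> simp [sub?] at hs
    | @app a c h1 h2 hn =>
      cases b
      · exact ih h1 hs
      · exact ih h2 hs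
    | @lam x a h1 hx hn =>
      cases b
      · exact ih h1 hs
      · simp [sub?] at hs

/-- a uniquely satisfying member is found by `find?` -/
theorem find?_eq_some_of_unique {α : Type*} {p : α → Bool} {l : List α} {a : α}
    (ha : a ∈ l) (hpa : p a = true) (huniq : ∀ b ∈ l, p b = true → b = a) :
    l.find? p = some a := by
  induction l with
  | nil => cases ha
  | cons x xs ih =>
    rcases List.mem_cons.mp ha with rfl | ha'
    · rw [List.find?_cons_of_pos hpa]
    · cases hpx : p x with
      | false =>
        rw [List.find?_cons_of_neg (by simp [hpx])]
        exact ih ha' (fun b hb hpb => huniq b (List.mem_cons_of_mem _ hb) hpb)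
      | true =>
        have := huniq x (by simp) hpx
        subst this
        rw [List.find?_cons_of_pos hpx]

/-- the number of free occurrence positions equals the count in `freeList` -/
theorem length_freeOccs (t : Term) (x : ℕ) :
    ((allPos t).filter
      (fun q => decide (sub? t q = some (.var x) ∧ binderPos t q = none))).length
      = (freeList t).count x := by
  induction t with
  | var y =>
    by_cases h : y = x <;>
      simp [allPos, sub?, binderPos_nil, freeList, h, List.count_singleton]
  | app a c iha ihc =>
    rw [show allPos (Term.app a c)
        = [] :: ((allPos a).map (false :: ·) ++ (allPos c).map (true :: ·)) from rfl]
    rw [List.filter_cons_of_neg (by simp [sub?]), List.filter_append,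
      List.filter_map, List.filter_map, List.length_append,
      List.length_map, List.length_map]
    have ha : ∀ q ∈ allPos a,
        ((fun q => decide (sub? (Term.app a c) q = some (.var x)
            ∧ binderPos (Term.app a c) q = none)) ∘ (false :: ·)) q
        = (fun q => decide (sub? a q = some (.var x) ∧ binderPos a q = none)) q := by
      intro q hq
      simp [Function.comp, sub?_app_false, binderPos_app_false,
        Option.map_eq_none_iff]
    have hc : ∀ q ∈ allPos c,
        ((fun q => decide (sub? (Term.app a c) q = some (.var x)
            ∧ binderPos (Term.app a c) q = none)) ∘ (true :: ·)) q
        = (fun q => decide (sub? c q = some (.var x) ∧ binderPos c q = none)) q := by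
      intro q hq
      simp [Function.comp, sub?_app_true, binderPos_app_true,
        Option.map_eq_none_iff]
    rw [List.filter_congr ha, List.filter_congr hc, iha, ihc]
    simp [freeList, List.count_append]
  | lam y a ih =>
    rw [show allPos (Term.lam y a) = [] :: (allPos a).map (false :: ·) from rfl]
    rw [List.filter_cons_of_neg (by simp [sub?]), List.filter_map, List.length_map]
    by_cases hyx : y = x
    · subst hyx
      have hz : ∀ q ∈ allPos a,
          ((fun q => decide (sub? (Term.lam y a) q = some (.var y)
              ∧ binderPos (Term.lam y a) q = none)) ∘ (false :: ·)) q
          = (fun _ => false) q := by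
        intro q hq
        simp only [Function.comp, decide_eq_false_iff_not]
        rintro ⟨h1, h2⟩
        rw [sub?_lam_false] at h1
        rw [binderPos_lam h1, if_pos rfl] at h2
        rcases Option.or_eq_none_iff.mp h2 with ⟨-, h3⟩
        simp at h3
      rw [List.filter_congr hz]
      have : (freeList (Term.lam y a)).count y = 0 := by
        rw [List.count_eq_zero]
        intro hc
        rw [show freeList (Term.lam y a)
            = (freeList a).filter (fun z => decide (z ≠ y)) from rfl] at hc
        have := (List.mem_filter.mp hc).2
        simp at this
      rw [this]
      simp
    · have hz : ∀ q ∈ allPos a,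
          ((fun q => decide (sub? (Term.lam y a) q = some (.var x)
              ∧ binderPos (Term.lam y a) q = none)) ∘ (false :: ·)) q
          = (fun q => decide (sub? a q = some (.var x) ∧ binderPos a q = none)) q := by
        intro q hq
        simp only [Function.comp, decide_eq_decide, sub?_lam_false]
        refine decide_eq_decide.mpr ?_
        constructor
        · rintro ⟨h1, h2⟩
          refine ⟨h1, ?_⟩
          rw [binderPos_lam h1, if_neg hyx] at h2
          rcases Option.or_eq_none_iff.mp h2 with ⟨h3, -⟩
          exact Option.map_eq_none_iff.mp h3
        · rintro ⟨h1, h2⟩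
          refine ⟨h1, ?_⟩
          rw [binderPos_lam h1, if_neg hyx, h2]
          rfl
      rw [List.filter_congr hz, ih]
      rw [show freeList (Term.lam y a)
          = (freeList a).filter (fun z => decide (z ≠ y)) from rfl]
      rw [List.count_filter (by simp [hyx]; exact fun h => hyx h.symm)]

end LamMap
namespace LamMap
open Term

/-- the number of occurrences bound by the abstraction at `r` equals the
count of the bound variable in the free list of the body -/
theorem length_boundOccs {t : Term} {r : List Bool} {x : ℕ} {b : Term}
    (h : sub? t r = some (.lam x b)) :
    ((allPos t).filter
      (fun q => decide (sub? t q = some (.var x) ∧ binderPos t q = some r))).length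
      = (freeList b).count x := by
  induction t generalizing r x b with
  | var y =>
    exfalso
    cases r with
    | nil => rw [sub?_nil] at h; simp at h
    | cons c r' => cases c <;> simp [sub?] at h
  | app a c iha ihc =>
    cases r with
    | nil =>
      rw [sub?_nil] at h
      exact absurd h (by simp)
    | cons d r' =>
      rw [show allPos (Term.app a c)
          = [] :: ((allPos a).map (false :: ·) ++ (allPos c).map (true :: ·)) from rfl]
      rw [List.filter_cons_of_neg (by simp [sub?_nil]), List.filter_append,
        List.filter_map, List.filter_map, List.length_append,
        List.length_map, List.length_map]
      cases d with
      | false =>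
        rw [sub?_app_false] at h
        have hfa : ∀ q ∈ allPos a,
            ((fun q => decide (sub? (Term.app a c) q = some (.var x)
                ∧ binderPos (Term.app a c) q = some (false :: r'))) ∘ (false :: ·)) q
            = (fun q => decide (sub? a q = some (.var x)
                ∧ binderPos a q = some r')) q := by
          intro q hq
          simp [Function.comp, sub?_app_false, binderPos_app_false,
            Option.map_eq_some_iff]
        have hfc : ∀ q ∈ allPos c,
            ((fun q => decide (sub? (Term.app a c) q = some (.var x)
                ∧ binderPos (Term.app a c) q = some (false :: r'))) ∘ (true :: ·)) q
            = (fun _ => false) q := by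
          intro q hq
          simp only [Function.comp, decide_eq_false_iff_not]
          rintro ⟨h1, h2⟩
          rw [binderPos_app_true] at h2
          rcases Option.map_eq_some_iff.mp h2 with ⟨w, -, hw⟩
          simp at hw
        rw [List.filter_congr hfa, List.filter_congr hfc, iha h]
        simp
      | true =>
        rw [sub?_app_true] at h
        have hfa : ∀ q ∈ allPos a,
            ((fun q => decide (sub? (Term.app a c) q = some (.var x)
                ∧ binderPos (Term.app a c) q = some (true :: r'))) ∘ (false :: ·)) q
            = (fun _ => false) q := by
          intro q hq
          simp only [Function.comp, decide_eq_false_iff_not]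
          rintro ⟨h1, h2⟩
          rw [binderPos_app_false] at h2
          rcases Option.map_eq_some_iff.mp h2 with ⟨w, -, hw⟩
          simp at hw
        have hfc : ∀ q ∈ allPos c,
            ((fun q => decide (sub? (Term.app a c) q = some (.var x)
                ∧ binderPos (Term.app a c) q = some (true :: r'))) ∘ (true :: ·)) q
            = (fun q => decide (sub? c q = some (.var x)
                ∧ binderPos c q = some r')) q := by
          intro q hq
          simp [Function.comp, sub?_app_true, binderPos_app_true,
            Option.map_eq_some_iff]
        rw [List.filter_congr hfa, List.filter_congr hfc, ihc h]
        simp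
  | lam y a ih =>
    cases r with
    | nil =>
      rw [sub?_nil] at h
      have hy : y = x ∧ a = b := by
        have := Option.some.inj h
        exact ⟨by injection this, by injection this⟩
      rcases hy with ⟨rfl, rfl⟩
      rw [show allPos (Term.lam y a) = [] :: (allPos a).map (false :: ·) from rfl]
      rw [List.filter_cons_of_neg (by simp [sub?_nil]), List.filter_map,
        List.length_map]
      have hf : ∀ q ∈ allPos a,
          ((fun q => decide (sub? (Term.lam y a) q = some (.var y)
              ∧ binderPos (Term.lam y a) q = some [])) ∘ (false :: ·)) q
          = (fun q => decide (sub? a q = some (.var y)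
              ∧ binderPos a q = none)) q := by
        intro q hq
        simp only [Function.comp, decide_eq_decide, sub?_lam_false]
        refine decide_eq_decide.mpr ?_
        constructor
        · rintro ⟨h1, h2⟩
          refine ⟨h1, ?_⟩
          rw [binderPos_lam h1, if_pos rfl] at h2
          cases hbp : binderPos a q with
          | none => rfl
          | some w =>
            rw [hbp] at h2
            exact absurd (Option.some.inj h2) (by simp)
        · rintro ⟨h1, h2⟩
          rw [binderPos_lam h1, if_pos rfl, h2]
          exact ⟨h1, rfl⟩
      rw [List.filter_congr hf, length_freeOccs]
    | cons d r' =>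
      have hd : d = false := by
        cases d
        · rfl
        · simp [sub?] at h
      subst hd
      rw [sub?_lam_false] at h
      rw [show allPos (Term.lam y a) = [] :: (allPos a).map (false :: ·) from rfl]
      rw [List.filter_cons_of_neg (by simp [sub?_nil]), List.filter_map,
        List.length_map]
      have hf : ∀ q ∈ allPos a,
          ((fun q => decide (sub? (Term.lam y a) q = some (.var x)
              ∧ binderPos (Term.lam y a) q = some (false :: r'))) ∘ (false :: ·)) q
          = (fun q => decide (sub? a q = some (.var x)
              ∧ binderPos a q = some r')) q := by
        intro q hq
        simp only [Function.comp, decide_eq_decide, sub?_lam_false]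
        refine decide_eq_decide.mpr ?_
        constructor
        · rintro ⟨h1, h2⟩
          refine ⟨h1, ?_⟩
          rw [binderPos_lam h1] at h2
          cases hbp : binderPos a q with
          | none =>
            rw [hbp] at h2
            exfalso
            by_cases hxy : y = x
            · rw [if_pos hxy] at h2
              exact absurd (Option.some.inj (show (some [] : Option (List Bool)) = _ from h2)) (by simp)
            · rw [if_neg hxy] at h2
              simp at h2
          | some w =>
            rw [hbp] at h2
            have : false :: w = false :: r' := Option.some.inj h2
            rw [List.cons.injEq] at this
            rw [this.2]
        · rintro ⟨h1, h2⟩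
          rw [binderPos_lam h1, h2]
          exact ⟨h1, rfl⟩
      rw [List.filter_congr hf, ih h]
end LamMap
namespace LamMap
open Term

theorem dnIdx_nil (t : Term) : dnIdx t [] = 0 := rfl

theorem dnIdx_concat_app {t : Term} {r : List Bool} {a b : Term}
    (hs : sub? t r = some (.app a b)) (d : Bool) :
    dnIdx t (r ++ [d]) = 1 + 3 * ((nodes t).idxOf r) + (if d then 1 else 0) := by
  unfold dnIdx
  rw [List.getLast?_concat, List.dropLast_concat]
  simp only [hs]

theorem dnIdx_concat_lam {t : Term} {r : List Bool} {x : ℕ} {b : Term}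
    (hs : sub? t r = some (.lam x b)) (d : Bool) :
    dnIdx t (r ++ [d]) = 1 + 3 * ((nodes t).idxOf r) := by
  unfold dnIdx
  rw [List.getLast?_concat, List.dropLast_concat]
  simp only [hs]
  omega

theorem topIdx_node {t : Term} {p : List Bool} {s : Term}
    (hs : sub? t p = some s) (hnv : ∀ x, s ≠ .var x) :
    topIdx t p = 1 + 3 * ((nodes t).idxOf p) + 2 := by
  unfold topIdx
  rw [hs]
  cases s with
  | var x => exact absurd rfl (hnv x)
  | app a b => rfl
  | lam y b => rfl

theorem topIdx_var_bound {t : Term} {p r : List Bool} {x : ℕ}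
    (hs : sub? t p = some (.var x)) (hb : binderPos t p = some r) :
    topIdx t p = 1 + 3 * ((nodes t).idxOf r) + 1 := by
  unfold topIdx
  rw [hs, hb]

theorem topIdx_var_free {t : Term} {p : List Bool} {x : ℕ}
    (hs : sub? t p = some (.var x)) (hb : binderPos t p = none) :
    topIdx t p = dnIdx t p := by
  unfold topIdx
  rw [hs, hb]

theorem beq_inst_eq : (instBEqOfDecidableEq (α := List Bool)) = List.instBEq :=
  lawful_beq_subsingleton _ _

theorem indexOf_lt_nodes {t : Term} {r : List Bool} (hr : r ∈ nodes t) :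
    (nodes t).idxOf r < (nodes t).length := by
  exact List.idxOf_lt_length_iff.mpr hr

theorem nodes_getElem?_indexOf {t : Term} {r : List Bool} (hr : r ∈ nodes t) :
    (nodes t)[(nodes t).idxOf r]? = some r := by
  have hlt := List.idxOf_lt_length_iff.mpr hr
  rw [List.getElem?_eq_getElem hlt, List.getElem_idxOf hlt]

theorem indexOf_nodes_inj {t : Term} {r r' : List Bool} (hr : r ∈ nodes t)
    (hr' : r' ∈ nodes t) (h : (nodes t).idxOf r = (nodes t).idxOf r') :
    r = r' := by
  have h1 := List.getElem_idxOf (List.idxOf_lt_length_iff.mpr hr)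
  have h2 := List.getElem_idxOf (List.idxOf_lt_length_iff.mpr hr')
  rw [← h1, ← h2]
  congr 1

theorem of_nodes_getElem? {t : Term} {j : ℕ} {p : List Bool}
    (h : (nodes t)[j]? = some p) :
    p ∈ nodes t ∧ (nodes t).idxOf p = j := by
  rw [List.getElem?_eq_some_iff] at h
  rcases h with ⟨hj, hp⟩
  constructor
  · rw [← hp]; exact List.getElem_mem hj
  · rw [← hp]; exact List.Nodup.idxOf_getElem (nodes_nodup t) j hj

/-- bound for `dnIdx` -/
theorem dnIdx_lt {t : Term} {p : List Bool} (hp : p ∈ allPos t) :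
    dnIdx t p < 3 * (nodes t).length + 1 := by
  rcases List.eq_nil_or_concat p with rfl | ⟨r, d, rfl⟩
  · rw [dnIdx_nil]; omega
  · rw [List.concat_eq_append] at hp ⊢
    have hr := parent_mem_nodes hp
    have hlt := indexOf_lt_nodes hr
    rcases (mem_nodes.mp hr) with ⟨s, hs, hnv⟩
    cases s with
    | var x => exact absurd rfl (hnv x)
    | app a b =>
      rw [dnIdx_concat_app hs]
      cases d <;> simp <;> omega
    | lam y b =>
      rw [dnIdx_concat_lam hs]
      omega

/-- bound for `topIdx` -/
theorem topIdx_lt {t : Term} {p : List Bool} (hp : p ∈ allPos t) :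
    topIdx t p < 3 * (nodes t).length + 1 := by
  rcases hsub : sub? t p with - | s
  · rw [mem_allPos, hsub] at hp; simp at hp
  cases s with
  | var x =>
    rcases hb : binderPos t p with - | r
    · rw [topIdx_var_free hsub hb]; exact dnIdx_lt hp
    · rcases binderPos_spec hb with ⟨x', bo, hx', hlam, -⟩
      have hr : r ∈ nodes t := mem_nodes.mpr ⟨_, hlam, by simp⟩
      have := indexOf_lt_nodes hr
      rw [topIdx_var_bound hsub hb]
      omega
  | app a b =>
    have hpn : p ∈ nodes t := mem_nodes.mpr ⟨_, hsub, by simp⟩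
    have := indexOf_lt_nodes hpn
    rw [topIdx_node hsub (by simp)]
    omega
  | lam y b =>
    have hpn : p ∈ nodes t := mem_nodes.mpr ⟨_, hsub, by simp⟩
    have := indexOf_lt_nodes hpn
    rw [topIdx_node hsub (by simp)]
    omega
end LamMap
namespace LamMap
open Term

/-- resolving `occOf` for a linear term -/
theorem occOf_spec {t : Term} (ht : Lin t) {p : List Bool} {x : ℕ} {b : Term}
    (hs : sub? t p = some (.lam x b)) :
    ∃ q, occOf t p x = some q ∧ q ∈ allPos t ∧ sub? t q = some (.var x) ∧
      binderPos t q = some p ∧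
      ∀ q' ∈ allPos t, sub? t q' = some (.var x) → binderPos t q' = some p → q' = q := by
  have hlin : Lin (.lam x b) := ht.sub hs
  have hcount : (freeList b).count x = 1 := by
    cases hlin with
    | lam h1 hx hn => exact List.count_eq_one_of_mem hn hx
  have hlen := length_boundOccs hs
  rw [hcount] at hlen
  rcases List.length_eq_one_iff.mp hlen with ⟨q, hq⟩
  have hqmem : q ∈ (allPos t).filter
      (fun q => decide (sub? t q = some (.var x) ∧ binderPos t q = some p)) := by
    rw [hq]; simp
  rw [List.mem_filter] at hqmem
  rcases hqmem with ⟨hq1, hq2⟩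
  rw [decide_eq_true_eq] at hq2
  have huniq : ∀ q' ∈ allPos t, sub? t q' = some (.var x) →
      binderPos t q' = some p → q' = q := by
    intro q' hq' h1 h2
    have : q' ∈ (allPos t).filter
        (fun q => decide (sub? t q = some (.var x) ∧ binderPos t q = some p)) :=
      List.mem_filter.mpr ⟨hq', by rw [decide_eq_true_eq]; exact ⟨h1, h2⟩⟩
    rw [hq] at this
    simpa using this
  refine ⟨q, ?_, hq1, hq2.1, hq2.2, huniq⟩
  unfold occOf
  exact find?_eq_some_of_unique hq1 (by rw [decide_eq_true_eq]; exact hq2)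
    (fun b hb hpb => huniq b hb
      (And.left (decide_eq_true_eq.mp hpb)) (And.right (decide_eq_true_eq.mp hpb)))

/-- resolving `freeOcc` -/
theorem freeOcc_spec {t : Term} (hn : (freeList t).Nodup) {x : ℕ}
    (hx : x ∈ freeList t) :
    ∃ q, freeOcc t x = some q ∧ q ∈ allPos t ∧ sub? t q = some (.var x) ∧
      binderPos t q = none ∧
      ∀ q' ∈ allPos t, sub? t q' = some (.var x) → binderPos t q' = none → q' = q := by
  have hcount : (freeList t).count x = 1 := List.count_eq_one_of_mem hn hx
  have hlen := length_freeOccs t x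
  rw [hcount] at hlen
  rcases List.length_eq_one_iff.mp hlen with ⟨q, hq⟩
  have hqmem : q ∈ (allPos t).filter
      (fun q => decide (sub? t q = some (.var x) ∧ binderPos t q = none)) := by
    rw [hq]; simp
  rw [List.mem_filter] at hqmem
  rcases hqmem with ⟨hq1, hq2⟩
  rw [decide_eq_true_eq] at hq2
  have huniq : ∀ q' ∈ allPos t, sub? t q' = some (.var x) →
      binderPos t q' = none → q' = q := by
    intro q' hq' h1 h2
    have : q' ∈ (allPos t).filter
        (fun q => decide (sub? t q = some (.var x) ∧ binderPos t q = none)) :=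
      List.mem_filter.mpr ⟨hq', by rw [decide_eq_true_eq]; exact ⟨h1, h2⟩⟩
    rw [hq] at this
    simpa using this
  refine ⟨q, ?_, hq1, hq2.1, hq2.2, huniq⟩
  unfold freeOcc
  exact find?_eq_some_of_unique hq1 (by rw [decide_eq_true_eq]; exact hq2)
    (fun b hb hpb => huniq b hb
      (And.left (decide_eq_true_eq.mp hpb)) (And.right (decide_eq_true_eq.mp hpb)))

/-- a free occurrence forces membership in the free list -/
theorem mem_freeList_of_occ {t : Term} {q : List Bool} {x : ℕ}
    (hq : q ∈ allPos t) (h1 : sub? t q = some (.var x))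
    (h2 : binderPos t q = none) : x ∈ freeList t := by
  have hmem : q ∈ (allPos t).filter
      (fun q => decide (sub? t q = some (.var x) ∧ binderPos t q = none)) :=
    List.mem_filter.mpr ⟨hq, by rw [decide_eq_true_eq]; exact ⟨h1, h2⟩⟩
  have hlen : 0 < ((allPos t).filter
      (fun q => decide (sub? t q = some (.var x) ∧ binderPos t q = none))).length :=
    List.length_pos_iff.mpr (List.ne_nil_of_mem hmem)
  rw [length_freeOccs] at hlen
  exact List.count_pos_iff.mp hlen

end LamMap
namespace LamMap
open Term

theorem eIdx_zero (t : Term) : eIdx t 0 = topIdx t [] := by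
  unfold eIdx
  rw [if_pos rfl]

theorem eIdx_eval {t : Term} {j i : ℕ} (hi : i < 3) {p : List Bool}
    (hp : (nodes t)[j]? = some p) :
    eIdx t (1+3*j+i) = match sub? t p with
      | some (.app _ _) => if i = 0 then topIdx t (p ++ [false])
          else if i = 1 then topIdx t (p ++ [true]) else dnIdx t p
      | some (.lam x _) => if i = 0 then topIdx t (p ++ [false])
          else if i = 1 then
            (match occOf t p x with | some q => dnIdx t q | none => 1+3*j+i)
          else dnIdx t p
      | _ => 1+3*j+i := by
  unfold eIdx
  rw [if_neg (by omega)]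
  have h1 : (1+3*j+i-1)/3 = j := by omega
  have h2 : (1+3*j+i-1)%3 = i := by omega
  simp only [h1, h2, hp]

theorem eIdx_dn {t : Term} {p : List Bool} (hp : p ∈ allPos t) :
    eIdx t (dnIdx t p) = topIdx t p := by
  rcases List.eq_nil_or_concat p with rfl | ⟨r, d, rfl⟩
  · rw [dnIdx_nil, eIdx_zero]
  · rw [List.concat_eq_append] at hp ⊢
    have hr := parent_mem_nodes hp
    have hge := nodes_getElem?_indexOf hr
    rcases mem_nodes.mp hr with ⟨s, hs, hnv⟩
    cases s with
    | var x => exact absurd rfl (hnv x)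
    | app a b =>
      rw [dnIdx_concat_app hs]
      cases d
      · rw [show (if (false:Bool) then 1 else 0) = 0 from rfl,
          eIdx_eval (by omega) hge, hs]
        simp
      · rw [show (if (true:Bool) then 1 else 0) = 1 from rfl,
          eIdx_eval (by omega) hge, hs]
        simp
    | lam x b =>
      have hd := lam_child_false hp hs
      subst hd
      rw [dnIdx_concat_lam hs,
        show (1+3*((nodes t).idxOf r)) = 1+3*((nodes t).idxOf r)+0 by omega,
        eIdx_eval (by omega) hge, hs]
      simp

theorem eIdx_top {t : Term} (ht : Lin t) {p : List Bool} (hp : p ∈ allPos t) :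
    eIdx t (topIdx t p) = dnIdx t p := by
  rcases hsub : sub? t p with - | s
  · rw [mem_allPos, hsub] at hp; simp at hp
  cases s with
  | var x =>
    rcases hb : binderPos t p with - | r
    · rw [topIdx_var_free hsub hb, eIdx_dn hp, topIdx_var_free hsub hb]
    · rcases binderPos_spec hb with ⟨x', bo, hx', hlam, -⟩
      have hxx : x' = x := by
        rw [hsub] at hx'
        have h' := Option.some.inj hx'
        injection h' with h''
        exact h''.symm
      subst hxx
      have hr : r ∈ nodes t := mem_nodes.mpr ⟨_, hlam, by simp⟩
      rcases occOf_spec ht hlam with ⟨q, hocc, hqmem, hqs, hqb, huniq⟩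
      have hpq : p = q := huniq p hp hsub hb
      subst hpq
      rw [topIdx_var_bound hsub hb,
        eIdx_eval (show (1:ℕ) < 3 by omega) (nodes_getElem?_indexOf hr), hlam]
      simp [hocc]
  | app a b =>
    have hpn : p ∈ nodes t := mem_nodes.mpr ⟨_, hsub, by simp⟩
    rw [topIdx_node hsub (by simp),
      eIdx_eval (show (2:ℕ) < 3 by omega) (nodes_getElem?_indexOf hpn), hsub]
    simp
  | lam y b =>
    have hpn : p ∈ nodes t := mem_nodes.mpr ⟨_, hsub, by simp⟩
    rw [topIdx_node hsub (by simp),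
      eIdx_eval (show (2:ℕ) < 3 by omega) (nodes_getElem?_indexOf hpn), hsub]
    simp

/-- every dart is the lower or upper end of a wire -/
theorem dart_cover {t : Term} (ht : Lin t) {d : ℕ}
    (hd : d < 3 * (nodes t).length + 1) :
    ∃ p ∈ allPos t, d = dnIdx t p ∨ d = topIdx t p := by
  rcases Nat.eq_zero_or_pos d with rfl | hpos
  · exact ⟨[], by rw [mem_allPos, sub?_nil]; rfl, Or.inl (dnIdx_nil t).symm⟩
  · have hj : (d-1)/3 < (nodes t).length := by omega
    have hge : (nodes t)[(d-1)/3]? = some ((nodes t)[(d-1)/3]'hj) :=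
      List.getElem?_eq_getElem hj
    set p := (nodes t)[(d-1)/3]'hj with hpdef
    rcases of_nodes_getElem? hge with ⟨hpn, hidx⟩
    have hpall := nodes_subset_allPos hpn
    rcases mem_nodes.mp hpn with ⟨s, hs, hnv⟩
    have hd' : d = 1 + 3*((d-1)/3) + (d-1)%3 := by omega
    have hi3 : (d-1)%3 < 3 := by omega
    cases s with
    | var x => exact absurd rfl (hnv x)
    | app a b =>
      rcases (show (d-1)%3 = 0 ∨ (d-1)%3 = 1 ∨ (d-1)%3 = 2 by omega) with h0 | h1 | h2
      · refine ⟨p ++ [false], ?_, Or.inl ?_⟩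
        · rw [mem_allPos, sub?_append, hs]; simp [sub?]
        · rw [dnIdx_concat_app hs, hidx]; simp; omega
      · refine ⟨p ++ [true], ?_, Or.inl ?_⟩
        · rw [mem_allPos, sub?_append, hs]; simp [sub?]
        · rw [dnIdx_concat_app hs, hidx]; simp; omega
      · exact ⟨p, hpall, Or.inr (by rw [topIdx_node hs (by simp), hidx]; omega)⟩
    | lam x b =>
      rcases (show (d-1)%3 = 0 ∨ (d-1)%3 = 1 ∨ (d-1)%3 = 2 by omega) with h0 | h1 | h2
      · refine ⟨p ++ [false], ?_, Or.inl ?_⟩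
        · rw [mem_allPos, sub?_append, hs]; simp [sub?]
        · rw [dnIdx_concat_lam hs, hidx]; omega
      · rcases occOf_spec ht hs with ⟨q, hocc, hqmem, hqs, hqb, -⟩
        exact ⟨q, hqmem, Or.inr (by rw [topIdx_var_bound hqs hqb, hidx]; omega)⟩
      · exact ⟨p, hpall, Or.inr (by rw [topIdx_node hs (by simp), hidx]; omega)⟩

theorem eIdx_lt {t : Term} (ht : Lin t) {d : ℕ}
    (hd : d < 3 * (nodes t).length + 1) :
    eIdx t d < 3 * (nodes t).length + 1 := by
  rcases dart_cover ht hd with ⟨p, hp, rfl | rfl⟩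
  · rw [eIdx_dn hp]; exact topIdx_lt hp
  · rw [eIdx_top ht hp]; exact dnIdx_lt hp

theorem eIdx_invol {t : Term} (ht : Lin t) {d : ℕ}
    (hd : d < 3 * (nodes t).length + 1) :
    eIdx t (eIdx t d) = d := by
  rcases dart_cover ht hd with ⟨p, hp, rfl | rfl⟩
  · rw [eIdx_dn hp, eIdx_top ht hp]
  · rw [eIdx_top ht hp, eIdx_dn hp]

end LamMap
namespace LamMap
open Term

/-- the two ends of a non-dangling wire are distinct -/
theorem dn_ne_top {t : Term} {p : List Bool} (hp : p ∈ allPos t)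
    (hnf : ¬ ∃ x, sub? t p = some (.var x) ∧ binderPos t p = none) :
    dnIdx t p ≠ topIdx t p := by
  rcases hsub : sub? t p with - | s
  · rw [mem_allPos, hsub] at hp; simp at hp
  cases s with
  | var x =>
    rcases hb : binderPos t p with - | r
    · exact absurd ⟨x, hsub, hb⟩ hnf
    rcases binderPos_spec hb with ⟨x', bo, -, hlam, -⟩
    have hrn : r ∈ nodes t := mem_nodes.mpr ⟨_, hlam, by simp⟩
    rw [topIdx_var_bound hsub hb]
    rcases List.eq_nil_or_concat p with rfl | ⟨r', d, rfl⟩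
    · rw [dnIdx_nil]; omega
    rw [List.concat_eq_append] at hp ⊢
    have hr' := parent_mem_nodes hp
    rcases mem_nodes.mp hr' with ⟨s', hs', hnv'⟩
    cases s' with
    | var z => exact absurd rfl (hnv' z)
    | app a b =>
      rw [dnIdx_concat_app hs']
      intro heq
      have hii : (if d then 1 else 0) = 1 ∧
          (nodes t).idxOf r' = (nodes t).idxOf r := by
        cases d <;> simp at heq ⊢ <;> omega
      have := indexOf_nodes_inj hr' hrn hii.2
      subst this
      rw [hs'] at hlam
      simp at hlam
    | lam y b =>
      rw [dnIdx_concat_lam hs']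
      intro heq
      omega
  | app a b =>
    have hpn : p ∈ nodes t := mem_nodes.mpr ⟨_, hsub, by simp⟩
    rw [topIdx_node hsub (by simp)]
    rcases List.eq_nil_or_concat p with rfl | ⟨r', d, rfl⟩
    · rw [dnIdx_nil]; omega
    rw [List.concat_eq_append] at hp ⊢
    have hr' := parent_mem_nodes hp
    rcases mem_nodes.mp hr' with ⟨s', hs', hnv'⟩
    cases s' with
    | var z => exact absurd rfl (hnv' z)
    | app a' b' =>
      rw [dnIdx_concat_app hs']
      cases d <;> simp <;> omega
    | lam y' b' =>
      rw [dnIdx_concat_lam hs']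
      omega
  | lam y b =>
    have hpn : p ∈ nodes t := mem_nodes.mpr ⟨_, hsub, by simp⟩
    rw [topIdx_node hsub (by simp)]
    rcases List.eq_nil_or_concat p with rfl | ⟨r', d, rfl⟩
    · rw [dnIdx_nil]; omega
    rw [List.concat_eq_append] at hp ⊢
    have hr' := parent_mem_nodes hp
    rcases mem_nodes.mp hr' with ⟨s', hs', hnv'⟩
    cases s' with
    | var z => exact absurd rfl (hnv' z)
    | app a' b' =>
      rw [dnIdx_concat_app hs']
      cases d <;> simp <;> omega
    | lam y' b' =>
      rw [dnIdx_concat_lam hs']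
      omega

/-- `dnIdx` is injective on positions -/
theorem dnIdx_inj {t : Term} {p p' : List Bool} (hp : p ∈ allPos t)
    (hp' : p' ∈ allPos t) (h : dnIdx t p = dnIdx t p') : p = p' := by
  rcases List.eq_nil_or_concat p with rfl | ⟨r, d, rfl⟩ <;>
    rcases List.eq_nil_or_concat p' with rfl | ⟨r', d', rfl⟩
  · rfl
  · exfalso
    rw [List.concat_eq_append] at hp'
    rw [dnIdx_nil, List.concat_eq_append] at h
    have hr' := parent_mem_nodes hp'
    rcases mem_nodes.mp hr' with ⟨s', hs', hnv'⟩
    cases s' with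
    | var z => exact absurd rfl (hnv' z)
    | app a b => rw [dnIdx_concat_app hs'] at h; omega
    | lam y b => rw [dnIdx_concat_lam hs'] at h; omega
  · exfalso
    rw [List.concat_eq_append] at hp
    rw [dnIdx_nil, List.concat_eq_append] at h
    have hr := parent_mem_nodes hp
    rcases mem_nodes.mp hr with ⟨s, hs, hnv⟩
    cases s with
    | var z => exact absurd rfl (hnv z)
    | app a b => rw [dnIdx_concat_app hs] at h; omega
    | lam y b => rw [dnIdx_concat_lam hs] at h; omega
  · simp only [List.concat_eq_append] at hp hp' h ⊢
    have hr := parent_mem_nodes hp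
    have hr' := parent_mem_nodes hp'
    rcases mem_nodes.mp hr with ⟨s, hs, hnv⟩
    rcases mem_nodes.mp hr' with ⟨s', hs', hnv'⟩
    cases s with
    | var z => exact absurd rfl (hnv z)
    | app a b =>
      rw [dnIdx_concat_app hs] at h
      cases s' with
      | var z => exact absurd rfl (hnv' z)
      | app a' b' =>
        rw [dnIdx_concat_app hs'] at h
        have hidx : (nodes t).idxOf r = (nodes t).idxOf r' ∧
            (if d then 1 else 0) = (if d' then (1:ℕ) else 0) := by
          cases d <;> cases d' <;> simp at h ⊢ <;> omega
        have hrr := indexOf_nodes_inj hr hr' hidx.1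
        subst hrr
        have hdd : d = d' := by
          rcases hidx with ⟨-, h2⟩
          cases d <;> cases d' <;> simp at h2 ⊢
        rw [hdd]
      | lam y' b' =>
        rw [dnIdx_concat_lam hs'] at h
        have hidx : (nodes t).idxOf r = (nodes t).idxOf r' := by
          cases d <;> simp at h <;> omega
        have hrr := indexOf_nodes_inj hr hr' hidx
        subst hrr
        rw [hs] at hs'
        exact absurd (Option.some.inj hs') (by simp)
    | lam y b =>
      rw [dnIdx_concat_lam hs] at h
      cases s' with
      | var z => exact absurd rfl (hnv' z)
      | app a' b' =>
        rw [dnIdx_concat_app hs'] at h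
        have hidx : (nodes t).idxOf r = (nodes t).idxOf r' := by
          cases d' <;> simp at h <;> omega
        have hrr := indexOf_nodes_inj hr hr' hidx
        subst hrr
        rw [hs] at hs'
        exact absurd (Option.some.inj hs') (by simp)
      | lam y' b' =>
        rw [dnIdx_concat_lam hs'] at h
        have hidx : (nodes t).idxOf r = (nodes t).idxOf r' := by omega
        have hrr := indexOf_nodes_inj hr hr' hidx
        subst hrr
        have hd := lam_child_false hp hs
        have hd' := lam_child_false hp' hs'
        rw [hd, hd']

/-- fixed points of the edge involution are exactly the dangling free wires -/
theorem eIdx_fix_iff {t : Term} (ht : Lin t) {d : ℕ}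
    (hd : d < 3 * (nodes t).length + 1) :
    eIdx t d = d ↔ ∃ q ∈ allPos t, ∃ x, sub? t q = some (.var x) ∧
      binderPos t q = none ∧ d = dnIdx t q := by
  constructor
  · intro hfix
    rcases dart_cover ht hd with ⟨p, hp, rfl | rfl⟩
    · rw [eIdx_dn hp] at hfix
      by_cases hnf : ∃ x, sub? t p = some (.var x) ∧ binderPos t p = none
      · rcases hnf with ⟨x, h1, h2⟩
        exact ⟨p, hp, x, h1, h2, rfl⟩
      · exact absurd hfix.symm (dn_ne_top hp hnf)
    · rw [eIdx_top ht hp] at hfix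
      by_cases hnf : ∃ x, sub? t p = some (.var x) ∧ binderPos t p = none
      · rcases hnf with ⟨x, h1, h2⟩
        exact ⟨p, hp, x, h1, h2, hfix.symm⟩
      · exact absurd hfix (dn_ne_top hp hnf)
  · rintro ⟨q, hq, x, h1, h2, rfl⟩
    rw [eIdx_dn hq, topIdx_var_free h1 h2]

end LamMap
namespace LamMap
open Term

theorem nodes_length (t : Term) :
    (nodes t).length = Term.apps t + Term.lams t := by
  induction t with
  | var x => simp [nodes, apps, lams]
  | app a b iha ihb => simp [nodes, apps, lams, iha, ihb]; omega
  | lam y a ih => simp [nodes, apps, lams, ih]; omega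

theorem underlying_v_zero (Γ : List ℕ) (t : Term)
    {d : Fin (3 * (nodes t).length + 1)} (hd : d.val = 0) :
    (underlying Γ t).v d = d := by
  show (if d.val = 0 then d else _) = d
  rw [if_pos hd]

theorem underlying_v_val (Γ : List ℕ) (t : Term)
    {d : Fin (3 * (nodes t).length + 1)} (hd : d.val ≠ 0) :
    ((underlying Γ t).v d).val
      = 1 + 3*((d.val-1)/3) + ((d.val-1)%3+2)%3 := by
  show (if d.val = 0 then d else
    (⟨(1 + 3 * ((d.val - 1) / 3) + ((d.val - 1) % 3 + 2) % 3) %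
      (3 * (Term.nodes t).length + 1), Nat.mod_lt _ (by omega)⟩ :
        Fin (3 * (nodes t).length + 1))).val = _
  rw [if_neg hd]
  have := d.isLt
  exact Nat.mod_eq_of_lt (by omega)

theorem underlying_e_val (Γ : List ℕ) {t : Term} (ht : Lin t)
    (d : Fin (3 * (nodes t).length + 1)) :
    ((underlying Γ t).e d).val = eIdx t d.val := by
  show eIdx t d.val % (3 * (nodes t).length + 1) = eIdx t d.val
  exact Nat.mod_eq_of_lt (eIdx_lt ht d.isLt)

theorem underlying_root_val (Γ : List ℕ) (t : Term) :
    ((underlying Γ t).root).val = 0 := rfl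

/-- connectivity: every lower dart is connected to the root -/
theorem conn_dn (Γ : List ℕ) {t : Term} (ht : Lin t) (p : List Bool) :
    p ∈ allPos t → ∀ a : (underlying Γ t).carrier, a.val = dnIdx t p →
    Relation.EqvGen (fun a b => (underlying Γ t).v a = b ∨ (underlying Γ t).e a = b)
      a (underlying Γ t).root := by
  set M := underlying Γ t with hM
  set R : M.carrier → M.carrier → Prop :=
    fun a b => M.v a = b ∨ M.e a = b with hR
  induction p using List.reverseRecOn with
  | nil =>
    intro _ a ha
    have : a = M.root := Fin.ext (by rw [ha, dnIdx_nil, underlying_root_val])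
    rw [this]
    exact Relation.EqvGen.refl _
  | append_singleton r d ih =>
    intro hp a ha
    have hr := parent_mem_nodes hp
    have hrall := nodes_subset_allPos hr
    have hj := indexOf_lt_nodes hr
    set j := (nodes t).idxOf r with hjdef
    have hlt0 : 1+3*j+0 < 3 * (nodes t).length + 1 := by omega
    have hlt1 : 1+3*j+1 < 3 * (nodes t).length + 1 := by omega
    have hlt2 : 1+3*j+2 < 3 * (nodes t).length + 1 := by omega
    have hv0 : M.v ⟨1+3*j+0, hlt0⟩ = ⟨1+3*j+2, hlt2⟩ := by
      apply Fin.ext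
      rw [underlying_v_val Γ t (by simp)]
      show 1+3*((1+3*j+0-1)/3)+((1+3*j+0-1)%3+2)%3 = 1+3*j+2
      omega
    have hv1 : M.v ⟨1+3*j+1, hlt1⟩ = ⟨1+3*j+0, hlt0⟩ := by
      apply Fin.ext
      rw [underlying_v_val Γ t (by simp)]
      show 1+3*((1+3*j+1-1)/3)+((1+3*j+1-1)%3+2)%3 = 1+3*j+0
      omega
    rcases mem_nodes.mp hr with ⟨s, hs, hnv⟩
    have htop : topIdx t r = 1+3*j+2 := topIdx_node hs hnv
    have hconn2 : Relation.EqvGen R ⟨1+3*j+2, hlt2⟩ M.root := by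
      have heval : (M.e ⟨1+3*j+2, hlt2⟩).val = dnIdx t r := by
        rw [underlying_e_val Γ ht]
        show eIdx t (1+3*j+2) = _
        rw [← htop, eIdx_top ht hrall]
      exact Relation.EqvGen.trans _ _ _
        (Relation.EqvGen.rel _ _ (Or.inr rfl)) (ih hrall _ heval)
    cases s with
    | var x => exact absurd rfl (hnv x)
    | app b c =>
      rw [dnIdx_concat_app hs, ← hjdef] at ha
      cases d with
      | false =>
        have : a = ⟨1+3*j+0, hlt0⟩ := Fin.ext (by rw [ha]; simp)
        rw [this]
        exact Relation.EqvGen.trans _ _ _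
          (Relation.EqvGen.rel _ _ (Or.inl hv0)) hconn2
      | true =>
        have : a = ⟨1+3*j+1, hlt1⟩ := Fin.ext (by rw [ha]; simp)
        rw [this]
        exact Relation.EqvGen.trans _ _ _
          (Relation.EqvGen.rel _ _ (Or.inl hv1))
          (Relation.EqvGen.trans _ _ _
            (Relation.EqvGen.rel _ _ (Or.inl hv0)) hconn2)
    | lam y c =>
      rw [dnIdx_concat_lam hs, ← hjdef] at ha
      have : a = ⟨1+3*j+0, hlt0⟩ := Fin.ext (by simp [ha])
      rw [this]
      exact Relation.EqvGen.trans _ _ _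
        (Relation.EqvGen.rel _ _ (Or.inl hv0)) hconn2

theorem conn_all (Γ : List ℕ) {t : Term} (ht : Lin t)
    (x : (underlying Γ t).carrier) :
    Relation.EqvGen (fun a b => (underlying Γ t).v a = b ∨ (underlying Γ t).e a = b)
      x (underlying Γ t).root := by
  rcases dart_cover ht x.isLt with ⟨p, hp, hval | hval⟩
  · exact conn_dn Γ ht p hp x hval
  · have heval : ((underlying Γ t).e x).val = dnIdx t p := by
      rw [underlying_e_val Γ ht x, hval, eIdx_top ht hp]
    exact Relation.EqvGen.trans _ _ _
      (Relation.EqvGen.rel _ _ (Or.inr rfl)) (conn_dn Γ ht p hp _ heval)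

end LamMap
/-- To any linear lambda term with `k` free variables, `p` applications and
`q` abstractions there is naturally associated (by the `underlying`
construction above) a rooted trivalent map with boundary of degree `k` and
`p + q` trivalent vertices: the result is a transitive `Γ₃`-set in which `v`
has exactly one fixed point (the root) and `e` has exactly `k` fixed points
(the boundary). -/
theorem underlying_is_rtmap_with_boundary :
    ∀ (Γ : List ℕ) (t : Term), Linear Γ t →
      IsRTMapB (underlying Γ t) ∧
      (underlying Γ t).boundary.length = Γ.length ∧
      Nat.card (underlying Γ t).carrier = 3 * (Term.apps t + Term.lams t) + 1 := by
  intro Γ t hlin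
  obtain ⟨ht, hperm⟩ := LamMap.linear_lin hlin
  have hΓnd : Γ.Nodup := LamMap.linear_nodup hlin
  have hfnd : (Term.freeList t).Nodup := ht.nodupFree
  refine ⟨⟨?_, ?_, ?_, ?_, ?_, ?_⟩, ?_, ?_⟩
  · -- v_cube
    intro x
    by_cases h : x.val = 0
    · rw [LamMap.underlying_v_zero Γ t h, LamMap.underlying_v_zero Γ t h,
        LamMap.underlying_v_zero Γ t h]
    · have h1 := LamMap.underlying_v_val Γ t h
      have hnz1 : ((underlying Γ t).v x).val ≠ 0 := by rw [h1]; omega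
      have h2 := LamMap.underlying_v_val Γ t hnz1
      have hnz2 : ((underlying Γ t).v ((underlying Γ t).v x)).val ≠ 0 := by
        rw [h2]; omega
      have h3 := LamMap.underlying_v_val Γ t hnz2
      apply Fin.ext
      rw [h3, h2, h1]
      have := x.isLt
      omega
  · -- e_sq
    intro x
    apply Fin.ext
    rw [LamMap.underlying_e_val Γ ht ((underlying Γ t).e x), LamMap.underlying_e_val Γ ht x,
      LamMap.eIdx_invol ht x.isLt]
  · -- trans
    intro x y
    exact Relation.EqvGen.trans _ _ _ (LamMap.conn_all Γ ht x)
      (Relation.EqvGen.symm _ _ (LamMap.conn_all Γ ht y))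
  · -- v_fix
    intro x
    constructor
    · intro hv
      by_cases h : x.val = 0
      · exact Fin.ext h
      · exfalso
        have h1 := LamMap.underlying_v_val Γ t h
        rw [hv] at h1
        have := x.isLt
        omega
    · intro hx
      rw [hx]
      exact LamMap.underlying_v_zero Γ t rfl
  · -- e_fix
    intro x
    have hiff : ((underlying Γ t).e x = x) ↔ (Term.eIdx t x.val = x.val) :=
      ⟨fun h => by rw [← LamMap.underlying_e_val Γ ht x, h],
       fun h => Fin.ext (by rw [LamMap.underlying_e_val Γ ht x, h])⟩
    rw [hiff, LamMap.eIdx_fix_iff ht x.isLt]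
    constructor
    · rintro ⟨q, hq, x0, h1, h2, hval⟩
      have hx0f : x0 ∈ Term.freeList t := LamMap.mem_freeList_of_occ hq h1 h2
      have hx0Γ : x0 ∈ Γ := hperm.mem_iff.mpr hx0f
      rcases LamMap.freeOcc_spec hfnd hx0f with ⟨q0, hocc, hq0, hs0, hb0, huniq⟩
      have hqq : q = q0 := huniq q hq h1 h2
      subst hqq
      show x ∈ (underlying Γ t).boundary
      rw [show (underlying Γ t).boundary = Γ.map (fun y =>
        (⟨(match Term.freeOcc t y with
          | some q => Term.dnIdx t q
          | none => 0) % (3 * (Term.nodes t).length + 1),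
          Nat.mod_lt _ (by omega)⟩ : Fin (3 * (Term.nodes t).length + 1)))
        from rfl]
      refine List.mem_map.mpr ⟨x0, hx0Γ, ?_⟩
      apply Fin.ext
      show (match Term.freeOcc t x0 with
          | some q => Term.dnIdx t q
          | none => 0) % (3 * (Term.nodes t).length + 1) = x.val
      rw [hocc, Nat.mod_eq_of_lt (LamMap.dnIdx_lt hq), hval]
    · intro hmem
      rw [show (underlying Γ t).boundary = Γ.map (fun y =>
        (⟨(match Term.freeOcc t y with
          | some q => Term.dnIdx t q
          | none => 0) % (3 * (Term.nodes t).length + 1),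
          Nat.mod_lt _ (by omega)⟩ : Fin (3 * (Term.nodes t).length + 1)))
        from rfl] at hmem
      rcases List.mem_map.mp hmem with ⟨x0, hx0Γ, heq⟩
      have hx0f : x0 ∈ Term.freeList t := hperm.mem_iff.mp hx0Γ
      rcases LamMap.freeOcc_spec hfnd hx0f with ⟨q0, hocc, hq0, hs0, hb0, huniq⟩
      refine ⟨q0, hq0, x0, hs0, hb0, ?_⟩
      rw [← heq]
      show (match Term.freeOcc t x0 with
          | some q => Term.dnIdx t q
          | none => 0) % (3 * (Term.nodes t).length + 1) = _
      rw [hocc, Nat.mod_eq_of_lt (LamMap.dnIdx_lt hq0)]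
  · -- nodup
    show ((underlying Γ t).boundary).Nodup
    rw [show (underlying Γ t).boundary = Γ.map (fun y =>
      (⟨(match Term.freeOcc t y with
        | some q => Term.dnIdx t q
        | none => 0) % (3 * (Term.nodes t).length + 1),
        Nat.mod_lt _ (by omega)⟩ : Fin (3 * (Term.nodes t).length + 1)))
      from rfl]
    apply List.Nodup.map_on ?_ hΓnd
    intro x1 hx1 x2 hx2 heq
    have hx1f : x1 ∈ Term.freeList t := hperm.mem_iff.mp hx1
    have hx2f : x2 ∈ Term.freeList t := hperm.mem_iff.mp hx2
    rcases LamMap.freeOcc_spec hfnd hx1f with ⟨q1, hocc1, hq1, hs1, hb1, -⟩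
    rcases LamMap.freeOcc_spec hfnd hx2f with ⟨q2, hocc2, hq2, hs2, hb2, -⟩
    have hval := congrArg Fin.val heq
    rw [show ((fun y =>
      (⟨(match Term.freeOcc t y with
        | some q => Term.dnIdx t q
        | none => 0) % (3 * (Term.nodes t).length + 1),
        Nat.mod_lt _ (by omega)⟩ : Fin (3 * (Term.nodes t).length + 1))) x1).val
      = (match Term.freeOcc t x1 with
        | some q => Term.dnIdx t q
        | none => 0) % (3 * (Term.nodes t).length + 1) from rfl] at hval
    rw [show ((fun y =>
      (⟨(match Term.freeOcc t y with
        | some q => Term.dnIdx t q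
        | none => 0) % (3 * (Term.nodes t).length + 1),
        Nat.mod_lt _ (by omega)⟩ : Fin (3 * (Term.nodes t).length + 1))) x2).val
      = (match Term.freeOcc t x2 with
        | some q => Term.dnIdx t q
        | none => 0) % (3 * (Term.nodes t).length + 1) from rfl] at hval
    rw [hocc1, hocc2, Nat.mod_eq_of_lt (LamMap.dnIdx_lt hq1),
      Nat.mod_eq_of_lt (LamMap.dnIdx_lt hq2)] at hval
    have hqeq : q1 = q2 := LamMap.dnIdx_inj hq1 hq2 hval
    subst hqeq
    rw [hs1] at hs2
    have := Option.some.inj hs2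
    injection this
  · -- boundary length
    show (Γ.map _).length = Γ.length
    exact List.length_map _
  · -- cardinality
    show Nat.card (Fin (3 * (Term.nodes t).length + 1)) = _
    rw [Nat.card_eq_fintype_card, Fintype.card_fin, LamMap.nodes_length]
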